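/- Let n ≥ 1, q > 1, x₀ ∈ ℝⁿ and R > 0. There exists a constant C = C(n,q) > 0 such that every nonnegative function u ∈ C²(B_R(x₀)) satisfying Δu = u^q in the open ball B_R(x₀) obeys u(x₀) ≤ C·R^{−2/(q-1)}. -/

import Mathlib

open Real MeasureTheory Metric

/-- The Euclidean Laplacian: sum of the second partial derivatives. -/
noncomputable def laplacian {n : ℕ} (u : EuclideanSpace ℝ (Fin n) → ℝ)
    (x : EuclideanSpace ℝ (Fin n)) : ℝ :=
  ∑ i : Fin n,
    fderiv ℝ (fun y => fderiv ℝ u y (EuclideanSpace.single i 1)) x (EuclideanSpace.single i 1)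

open Filter

variable {n : ℕ}
local notation "EuclidSp" => EuclideanSpace ℝ (Fin n)

lemma secondDeriv_nonpos_of_isLocalMax {φ φ' : ℝ → ℝ} {a : ℝ}
    (hmax : IsLocalMax φ 0)
    (hd : ∀ᶠ t in nhds (0:ℝ), HasDerivAt φ (φ' t) t)
    (hd2 : HasDerivAt φ' a 0) : a ≤ 0 := by
  by_contra hlt
  push_neg at hlt
  have h0 : φ' 0 = 0 := by
    have := hmax.deriv_eq_zero
    rwa [hd.self_of_nhds.deriv] at this
  -- slope of φ' at 0 tends to a > 0
  have hslope : Tendsto (fun t => φ' t / t) (nhdsWithin 0 {(0:ℝ)}ᶜ) (nhds a) := by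
    have := hasDerivAt_iff_tendsto_slope.mp hd2
    have heq : (fun t => φ' t / t) =ᶠ[nhdsWithin 0 {(0:ℝ)}ᶜ] slope φ' 0 := by
      filter_upwards with t
      rw [slope_def_field, h0, sub_zero, sub_zero]
    exact Tendsto.congr' heq.symm this
  have hpos : ∀ᶠ t in nhdsWithin 0 {(0:ℝ)}ᶜ, 0 < φ' t / t :=
    hslope.eventually (eventually_gt_nhds hlt)
  -- extract ε
  rw [eventually_nhdsWithin_iff] at hpos
  obtain ⟨ε₁, hε₁, h₁⟩ := Metric.eventually_nhds_iff.mp hpos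
  obtain ⟨ε₂, hε₂, h₂⟩ := Metric.eventually_nhds_iff.mp hd
  obtain ⟨ε₃, hε₃, h₃⟩ := Metric.eventually_nhds_iff.mp hmax
  set ε := min ε₁ (min ε₂ ε₃) with hε
  have hεpos : 0 < ε := lt_min hε₁ (lt_min hε₂ hε₃)
  -- φ strictly mono on [0, ε/2]
  have hmono : StrictMonoOn φ (Set.Icc 0 (ε/2)) := by
    apply strictMonoOn_of_deriv_pos (convex_Icc _ _)
    · intro t ht
      have : dist t 0 < ε₂ := by
        simp only [Real.dist_eq, sub_zero]
        rw [abs_of_nonneg ht.1]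
        calc t ≤ ε/2 := ht.2
        _ < ε := by linarith
        _ ≤ ε₂ := le_trans (min_le_right _ _) (min_le_left _ _)
      exact (h₂ this).continuousAt.continuousWithinAt
    · intro t ht
      rw [interior_Icc] at ht
      have hdist : dist t 0 < ε₂ := by
        simp only [Real.dist_eq, sub_zero]
        rw [abs_of_nonneg ht.1.le]
        calc t < ε/2 := ht.2
        _ < ε := by linarith
        _ ≤ ε₂ := le_trans (min_le_right _ _) (min_le_left _ _)
      rw [(h₂ hdist).deriv]
      have hd1 : dist t 0 < ε₁ := by
        simp only [Real.dist_eq, sub_zero]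
        rw [abs_of_nonneg ht.1.le]
        calc t < ε/2 := ht.2
        _ < ε := by linarith
        _ ≤ ε₁ := min_le_left _ _
      have := h₁ hd1 (by simp [ht.1.ne'])
      have := mul_pos this ht.1
      rwa [div_mul_cancel₀ _ ht.1.ne'] at this
  have hlt' : φ 0 < φ (ε/2) :=
    hmono (by constructor <;> linarith) (by constructor <;> linarith) (by linarith)
  have : φ (ε/2) ≤ φ 0 := by
    apply h₃
    simp only [Real.dist_eq, sub_zero]
    rw [abs_of_nonneg (by linarith)]
    calc ε/2 < ε := by linarith
    _ ≤ ε₃ := le_trans (min_le_right _ _) (min_le_right _ _)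
  linarith
lemma directional_second_nonpos' {n : ℕ} {w : EuclideanSpace ℝ (Fin n) → ℝ}
    {W : EuclideanSpace ℝ (Fin n) → (EuclideanSpace ℝ (Fin n) →L[ℝ] ℝ)}
    {W₂ : EuclideanSpace ℝ (Fin n) →L[ℝ] ℝ} {y e : EuclideanSpace ℝ (Fin n)}
    (hmax : IsLocalMax w y)
    (hw1 : ∀ᶠ x in nhds y, HasFDerivAt w (W x) x)
    (hw2 : HasFDerivAt (fun x => W x e) W₂ y) :
    W₂ e ≤ 0 := by
  set L : ℝ → EuclideanSpace ℝ (Fin n) := fun t => y + t • e with hLdef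
  have hL0 : L 0 = y := by simp [hLdef]
  have hL : ∀ t, HasDerivAt L e t := by
    intro t
    have := ((hasDerivAt_id t).smul_const e).const_add y
    simpa [hLdef] using this
  have hLcont : ContinuousAt L 0 := (hL 0).continuousAt
  have hLtend : Tendsto L (nhds 0) (nhds y) := hL0 ▸ hLcont.tendsto
  apply secondDeriv_nonpos_of_isLocalMax (φ := w ∘ L) (φ' := fun t => W (L t) e)
  · exact IsLocalMax.comp_continuous (by rwa [hL0]) hLcont
  · filter_upwards [hLtend.eventually hw1] with t ht
    exact ht.comp_hasDerivAt t (hL t)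
  · have hw2' : HasFDerivAt (fun x => W x e) W₂ (L 0) := by rwa [hL0]
    exact hw2'.comp_hasDerivAt 0 (hL 0)

lemma laplacian_eq_of_hasFDerivAt {n : ℕ} {w : EuclideanSpace ℝ (Fin n) → ℝ}
    {W : EuclideanSpace ℝ (Fin n) → (EuclideanSpace ℝ (Fin n) →L[ℝ] ℝ)}
    {W₂ : Fin n → (EuclideanSpace ℝ (Fin n) →L[ℝ] ℝ)} {y : EuclideanSpace ℝ (Fin n)}
    (hw1 : ∀ᶠ x in nhds y, HasFDerivAt w (W x) x)
    (hw2 : ∀ i, HasFDerivAt (fun x => W x (EuclideanSpace.single i 1)) (W₂ i) y) :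
    laplacian w y = ∑ i, W₂ i (EuclideanSpace.single i 1) := by
  unfold laplacian
  refine Finset.sum_congr rfl fun i _ => ?_
  have heq : (fun x => fderiv ℝ w x (EuclideanSpace.single i 1))
      =ᶠ[nhds y] (fun x => W x (EuclideanSpace.single i 1)) := by
    filter_upwards [hw1] with x hx
    rw [hx.fderiv]
  rw [heq.fderiv_eq, (hw2 i).fderiv]


lemma euclid_norm_sq (x : EuclidSp) : ‖x‖^2 = ∑ i, (x i)^2 := by
  rw [EuclideanSpace.norm_eq, Real.sq_sqrt (Finset.sum_nonneg fun i _ => sq_nonneg _)]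
  congr 1; ext i; rw [Real.norm_eq_abs, sq_abs]

noncomputable def vKO (c : EuclidSp) (r Λ α : ℝ) (x : EuclidSp) : ℝ := Λ * (r^2 - ‖x - c‖^2) ^ (-α)

noncomputable def WvKO (c : EuclidSp) (r Λ α : ℝ) (x : EuclidSp) : EuclidSp →L[ℝ] ℝ :=
  (2*Λ*α*(r^2 - ‖x - c‖^2) ^ (-α-1)) • innerSL ℝ (x - c)

lemma hasFDerivAt_normsq (c : EuclidSp) (x : EuclidSp) :
    HasFDerivAt (fun z : EuclidSp => ‖z - c‖^2) ((2:ℝ) • (innerSL ℝ (x - c))) x := by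
  have := ((hasFDerivAt_id x).sub_const c).norm_sq
  refine this.congr_fderiv ?_
  ext h
  simp only [ContinuousLinearMap.smul_apply, ContinuousLinearMap.comp_apply,
    ContinuousLinearMap.coe_id', id_eq, smul_eq_mul, nsmul_eq_mul, Nat.cast_ofNat]

lemma vKO_hasFDerivAt (c : EuclidSp) (r Λ α : ℝ) {x : EuclidSp} (hx : ‖x - c‖^2 < r^2) :
    HasFDerivAt (vKO c r Λ α) (WvKO c r Λ α x) x := by
  have hT : 0 < r^2 - ‖x - c‖^2 := by linarith
  have hg := ((((hasDerivAt_id (‖x - c‖^2)).const_sub (r^2)).rpow_const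
      (p := -α) (Or.inl hT.ne')).const_mul Λ)
  have h2 := hg.comp_hasFDerivAt x (hasFDerivAt_normsq c x)
  refine h2.congr_fderiv ?_
  ext h
  simp only [WvKO, ContinuousLinearMap.smul_apply, innerSL_apply_apply, smul_eq_mul, id_eq]
  ring

lemma vKO_apply_hasFDerivAt (c : EuclidSp) (r Λ α : ℝ) {x : EuclidSp} (hx : ‖x - c‖^2 < r^2) (e : EuclidSp) :
    HasFDerivAt (fun z => WvKO c r Λ α z e)
      (((4*Λ*α*(α+1)*(r^2 - ‖x - c‖^2) ^ (-α-2)) * (innerSL ℝ (x-c)) e) • innerSL ℝ (x - c)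
        + (2*Λ*α*(r^2 - ‖x - c‖^2) ^ (-α-1)) • innerSL ℝ e) x := by
  have hT : 0 < r^2 - ‖x - c‖^2 := by linarith
  have hA : HasFDerivAt (fun z : EuclidSp => 2*Λ*α*(r^2 - ‖z - c‖^2) ^ (-α-1))
      ((4*Λ*α*(α+1)*(r^2 - ‖x - c‖^2) ^ (-α-2)) • innerSL ℝ (x - c)) x := by
    have hg := ((((hasDerivAt_id (‖x - c‖^2)).const_sub (r^2)).rpow_const
        (p := -α-1) (Or.inl hT.ne')).const_mul (2*Λ*α))
    have h2 := hg.comp_hasFDerivAt x (hasFDerivAt_normsq c x)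
    refine h2.congr_fderiv ?_
    ext h
    simp only [ContinuousLinearMap.smul_apply, innerSL_apply_apply, smul_eq_mul, id_eq]
    rw [show (-α-1-1 : ℝ) = -α-2 by ring]
    ring
  have hB : HasFDerivAt (fun z : EuclidSp => (innerSL ℝ e) (z - c)) (innerSL ℝ e) x := by
    have := (innerSL ℝ e).hasFDerivAt.comp x ((hasFDerivAt_id x).sub_const c)
    refine this.congr_fderiv ?_
    exact ContinuousLinearMap.comp_id _
  have heq : (fun z => WvKO c r Λ α z e)
      = fun z : EuclidSp => (2*Λ*α*(r^2 - ‖z - c‖^2) ^ (-α-1)) * (innerSL ℝ e) (z - c) := by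
    funext z
    simp only [WvKO, ContinuousLinearMap.smul_apply, innerSL_apply_apply, smul_eq_mul]
    rw [real_inner_comm]
  rw [heq]
  have h3 := hA.mul hB
  refine h3.congr_fderiv ?_
  ext h
  simp only [ContinuousLinearMap.add_apply, ContinuousLinearMap.smul_apply,
    innerSL_apply_apply, smul_eq_mul]
  rw [real_inner_comm e (x - c)]
  ring

lemma norm_sq_lt_of_mem_ball {c x : EuclidSp} {r : ℝ} (hx : x ∈ ball c r) :
    ‖x - c‖^2 < r^2 := by
  rw [mem_ball_iff_norm] at hx
  have h0 : (0:ℝ) ≤ ‖x - c‖ := norm_nonneg _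
  nlinarith

lemma laplacian_vKO (c : EuclidSp) (r Λ α : ℝ) {y : EuclidSp} (hy : y ∈ ball c r) :
    laplacian (vKO c r Λ α) y
      = 4*Λ*α*(α+1)*(r^2 - ‖y - c‖^2) ^ (-α-2) * ‖y - c‖^2
        + n * (2*Λ*α*(r^2 - ‖y - c‖^2) ^ (-α-1)) := by
  have hy2 := norm_sq_lt_of_mem_ball hy
  have hw1 : ∀ᶠ x in nhds y, HasFDerivAt (vKO c r Λ α) (WvKO c r Λ α x) x := by
    filter_upwards [isOpen_ball.mem_nhds hy] with x hx
    exact vKO_hasFDerivAt c r Λ α (norm_sq_lt_of_mem_ball hx)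
  rw [laplacian_eq_of_hasFDerivAt hw1
    (fun i => vKO_apply_hasFDerivAt c r Λ α hy2 (EuclideanSpace.single i 1))]
  have hsimp : ∀ i : Fin n,
      (((4*Λ*α*(α+1)*(r^2 - ‖y - c‖^2) ^ (-α-2)) * (innerSL ℝ (y-c)) (EuclideanSpace.single i 1)) •
          innerSL ℝ (y - c) + (2*Λ*α*(r^2 - ‖y - c‖^2) ^ (-α-1)) •
          innerSL ℝ (EuclideanSpace.single i 1) : EuclidSp →L[ℝ] ℝ) (EuclideanSpace.single i 1)
      = 4*Λ*α*(α+1)*(r^2 - ‖y - c‖^2) ^ (-α-2) * ((y-c) i)^2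
        + 2*Λ*α*(r^2 - ‖y - c‖^2) ^ (-α-1) := by
    intro i
    simp only [ContinuousLinearMap.add_apply, ContinuousLinearMap.smul_apply, innerSL_apply_apply,
      smul_eq_mul]
    have h1 : (inner ℝ (y - c) (EuclideanSpace.single i (1:ℝ)) : ℝ) = (y - c) i := by
      rw [EuclideanSpace.inner_single_right]; simp
    have h2 : (inner ℝ (EuclideanSpace.single i (1:ℝ)) (EuclideanSpace.single i (1:ℝ)) : ℝ) = 1 := by
      rw [EuclideanSpace.inner_single_right]; simp [EuclideanSpace.single_apply]
    rw [h1, h2]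
    ring
  rw [Finset.sum_congr rfl fun i _ => hsimp i, Finset.sum_add_distrib, Finset.sum_const,
    Finset.card_univ, ← Finset.mul_sum]
  rw [← euclid_norm_sq (y - c)]
  simp [nsmul_eq_mul]

lemma vKO_superineq (hn : 1 ≤ n) {q α K Λ r : ℝ} (hq : 1 < q) (hα : α = 2/(q-1))
    (hK : K = α*(4*(α+1)+2*n)) (hr : 0 < r) (hΛ : 0 < Λ) (hΛq : Λ ^ (q-1) = K*r^2)
    (c : EuclidSp) {y : EuclidSp} (hy : y ∈ ball c r) :
    laplacian (vKO c r Λ α) y ≤ (vKO c r Λ α y) ^ q := by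
  have hq1 : 0 < q - 1 := by linarith
  have hαpos : 0 < α := by rw [hα]; positivity
  have hy2 := norm_sq_lt_of_mem_ball hy
  set s := ‖y - c‖^2 with hs
  have hs0 : 0 ≤ s := sq_nonneg _
  have hT : 0 < r^2 - s := by linarith
  rw [laplacian_vKO c r Λ α hy]
  have hvy : vKO c r Λ α y = Λ * (r^2 - s) ^ (-α) := rfl
  -- rewrite RHS
  have hαq : α * q = α + 2 := by
    rw [hα]
    field_simp
    ring
  have hrhs : (vKO c r Λ α y) ^ q = Λ * K * r^2 * (r^2 - s) ^ (-α-2) := by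
    have hΛq' : Λ ^ q = K * r^2 * Λ := by
      rw [show q = q-1+1 by ring, Real.rpow_add hΛ, Real.rpow_one, hΛq]
    rw [hvy, Real.mul_rpow hΛ.le (Real.rpow_nonneg hT.le _), hΛq',
      ← Real.rpow_mul hT.le, show (-α)*q = -α-2 by rw [neg_mul, hαq]; ring]
    ring
  have hTT : (r^2 - s) ^ (-α-1) = (r^2 - s) ^ (-α-2) * (r^2 - s) := by
    rw [show (-α-1 : ℝ) = -α-2+1 by ring, Real.rpow_add_one hT.ne']
  have hP : (0:ℝ) < (r^2 - s) ^ (-α-2) := Real.rpow_pos_of_pos hT _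
  have key : 4*Λ*α*(α+1)*s + n*(2*Λ*α*(r^2-s)) ≤ Λ*K*r^2 := by
    have h1 : 0 ≤ Λ*α*(α+1)*(r^2-s) := by positivity
    have h2 : 0 ≤ Λ*α*(n:ℝ)*s := by positivity
    rw [hK]
    nlinarith [h1, h2]
  calc 4*Λ*α*(α+1)*(r^2 - s) ^ (-α-2) * s + n*(2*Λ*α*(r^2 - s) ^ (-α-1))
      = (r^2 - s) ^ (-α-2) * (4*Λ*α*(α+1)*s + n*(2*Λ*α*(r^2-s))) := by rw [hTT]; ring
    _ ≤ (r^2 - s) ^ (-α-2) * (Λ*K*r^2) := by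
        exact mul_le_mul_of_nonneg_left key hP.le
    _ = (vKO c r Λ α y) ^ q := by rw [hrhs]; ring

lemma keyKO {q : ℝ} (hq : 1 < q) (x₀ : EuclidSp) (R : ℝ) (u : EuclidSp → ℝ)
    (hu : ContDiffOn ℝ 2 u (ball x₀ R))
    (hun : ∀ x ∈ ball x₀ R, 0 ≤ u x)
    (hpde : ∀ x ∈ ball x₀ R, laplacian u x = u x ^ q)
    (hn : 1 ≤ n) {r Λ α K : ℝ} (hr : 0 < r) (hrR : r < R)
    (hα : α = 2/(q-1)) (hK : K = α*(4*(α+1)+2*n)) (hΛ : 0 < Λ)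
    (hΛq : Λ ^ (q-1) = K*r^2) :
    u x₀ ≤ vKO x₀ r Λ α x₀ := by
  have hq1 : (0:ℝ) < q - 1 := by linarith
  have hαpos : 0 < α := by rw [hα]; positivity
  by_contra hcon
  push_neg at hcon
  have hball : ball x₀ r ⊆ ball x₀ R := ball_subset_ball hrR.le
  have hcb : closedBall x₀ r ⊆ ball x₀ R := closedBall_subset_ball hrR
  obtain ⟨z, hz, hzmax⟩ := (isCompact_closedBall x₀ r).exists_isMaxOn
    ⟨x₀, mem_closedBall_self hr.le⟩ (hu.continuousOn.mono hcb)
  set B := max (u z) 1 with hBdef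
  have hB : (0:ℝ) < B := lt_of_lt_of_le one_pos (le_max_right _ _)
  have hBbound : ∀ x ∈ closedBall x₀ r, u x ≤ B := fun x hx => (hzmax hx).trans (le_max_left _ _)
  set ε := min ((Λ/B) ^ (α⁻¹)) (r^2) with hεdef
  have hε : 0 < ε := lt_min (Real.rpow_pos_of_pos (div_pos hΛ hB) _) (by positivity)
  have hεr : ε ≤ r^2 := min_le_right _ _
  set ρ := Real.sqrt (r^2 - ε/2) with hρdef
  have hρ0 : 0 ≤ ρ := Real.sqrt_nonneg _
  have hρsq : ρ^2 = r^2 - ε/2 := Real.sq_sqrt (by linarith)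
  have hρr : ρ < r := by
    rw [hρdef]
    have := Real.sqrt_lt_sqrt (by linarith : (0:ℝ) ≤ r^2 - ε/2)
      (show r^2 - ε/2 < r^2 by linarith)
    rwa [Real.sqrt_sq hr.le] at this
  have hannulus : ∀ x ∈ ball x₀ r, ρ < dist x x₀ → B ≤ vKO x₀ r Λ α x := by
    intro x hx hdx
    have hs2 : ‖x - x₀‖^2 < r^2 := norm_sq_lt_of_mem_ball hx
    have hdist : dist x x₀ = ‖x - x₀‖ := dist_eq_norm _ _
    have hρs : ρ^2 ≤ ‖x - x₀‖^2 :=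
      pow_le_pow_left₀ hρ0 (by rw [← hdist]; exact hdx.le) 2
    have hT : 0 < r^2 - ‖x - x₀‖^2 := by linarith
    have hTle : r^2 - ‖x - x₀‖^2 ≤ (Λ/B) ^ (α⁻¹) := by
      have h1 : r^2 - ‖x - x₀‖^2 ≤ ε/2 := by
        have := hρsq; nlinarith [hρs]
      calc r^2 - ‖x - x₀‖^2 ≤ ε/2 := h1
        _ ≤ ε := by linarith
        _ ≤ (Λ/B) ^ (α⁻¹) := min_le_left _ _
    have hApos : (0:ℝ) < (Λ/B) ^ (α⁻¹) := Real.rpow_pos_of_pos (div_pos hΛ hB) _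
    have h1 : ((Λ/B) ^ (α⁻¹)) ^ (-α) ≤ (r^2 - ‖x - x₀‖^2) ^ (-α) :=
      (Real.rpow_le_rpow_iff_of_neg hApos hT (by linarith)).mpr hTle
    have h2 : ((Λ/B) ^ (α⁻¹)) ^ (-α) = B/Λ := by
      rw [← Real.rpow_mul (div_pos hΛ hB).le,
        show α⁻¹ * (-α) = -1 by field_simp, Real.rpow_neg_one, inv_div]
    show B ≤ Λ * (r^2 - ‖x - x₀‖^2) ^ (-α)
    calc B = Λ * (B/Λ) := by field_simp
      _ ≤ Λ * (r^2 - ‖x - x₀‖^2) ^ (-α) := by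
          apply mul_le_mul_of_nonneg_left _ hΛ.le
          rw [← h2]; exact h1
  have hsubρ : closedBall x₀ ρ ⊆ ball x₀ r := closedBall_subset_ball hρr
  set w := fun x => u x - vKO x₀ r Λ α x with hwdef
  have hwcont : ContinuousOn w (closedBall x₀ ρ) := by
    apply ContinuousOn.sub
    · exact hu.continuousOn.mono (hsubρ.trans hball)
    · intro x hx
      exact (vKO_hasFDerivAt x₀ r Λ α
        (norm_sq_lt_of_mem_ball (hsubρ hx))).continuousAt.continuousWithinAt
  obtain ⟨y, hyρ, hymax⟩ := (isCompact_closedBall x₀ ρ).exists_isMaxOn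
    ⟨x₀, mem_closedBall_self hρ0⟩ hwcont
  have hyball : y ∈ ball x₀ r := hsubρ hyρ
  have hwx₀ : 0 < w x₀ := sub_pos.mpr hcon
  have hwy : 0 < w y := lt_of_lt_of_le hwx₀ (hymax (mem_closedBall_self hρ0))
  have hglobal : ∀ x ∈ ball x₀ r, w x ≤ w y := by
    intro x hx
    by_cases hdx : dist x x₀ ≤ ρ
    · exact hymax (mem_closedBall.mpr hdx)
    · push_neg at hdx
      have h1 : u x ≤ B := hBbound x (ball_subset_closedBall hx)
      have h2 : B ≤ vKO x₀ r Λ α x := hannulus x hx hdx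
      have h3 : w x ≤ 0 := by simp only [hwdef]; linarith
      linarith
  have hlocmax : IsLocalMax w y :=
    Filter.eventually_of_mem (isOpen_ball.mem_nhds hyball) hglobal
  -- derivative data for u
  have hu2 : ∀ x ∈ ball x₀ R, HasFDerivAt u (fderiv ℝ u x) x := fun x hx =>
    (((hu.contDiffAt (isOpen_ball.mem_nhds hx)).differentiableAt
      (by norm_num)).hasFDerivAt)
  have hucd : ∀ e : EuclidSp, HasFDerivAt (fun x => fderiv ℝ u x e)
      (fderiv ℝ (fun x => fderiv ℝ u x e) y) y := by
    intro e
    have hcd : ContDiffAt ℝ 2 u y := hu.contDiffAt (isOpen_ball.mem_nhds (hball hyball))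
    have hfd : DifferentiableAt ℝ (fderiv ℝ u) y :=
      (hcd.fderiv_right (m := 1) (by norm_num)).differentiableAt one_ne_zero
    have : DifferentiableAt ℝ (fun x => fderiv ℝ u x e) y :=
      ((ContinuousLinearMap.apply ℝ ℝ e).differentiable.differentiableAt).comp y hfd
    exact this.hasFDerivAt
  have hy2 : ‖y - x₀‖^2 < r^2 := norm_sq_lt_of_mem_ball hyball
  -- directional comparison at y
  have hW1 : ∀ᶠ x in nhds y, HasFDerivAt w (fderiv ℝ u x - WvKO x₀ r Λ α x) x := by
    filter_upwards [isOpen_ball.mem_nhds hyball] with x hx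
    exact (hu2 x (hball hx)).sub (vKO_hasFDerivAt x₀ r Λ α (norm_sq_lt_of_mem_ball hx))
  have hdir : ∀ i : Fin n,
      fderiv ℝ (fun x => fderiv ℝ u x (EuclideanSpace.single i 1)) y (EuclideanSpace.single i 1)
        ≤ (((4*Λ*α*(α+1)*(r^2 - ‖y - x₀‖^2) ^ (-α-2)) *
              (innerSL ℝ (y-x₀)) (EuclideanSpace.single i 1)) • innerSL ℝ (y - x₀)
            + (2*Λ*α*(r^2 - ‖y - x₀‖^2) ^ (-α-1)) • innerSL ℝ (EuclideanSpace.single i 1)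
            : EuclidSp →L[ℝ] ℝ) (EuclideanSpace.single i 1) := by
    intro i
    set e := EuclideanSpace.single i (1:ℝ) with hedef
    set Dv := (((4*Λ*α*(α+1)*(r^2 - ‖y - x₀‖^2) ^ (-α-2)) * (innerSL ℝ (y-x₀)) e) •
        innerSL ℝ (y - x₀) + (2*Λ*α*(r^2 - ‖y - x₀‖^2) ^ (-α-1)) • innerSL ℝ e
        : EuclidSp →L[ℝ] ℝ) with hDvdef
    set Du := fderiv ℝ (fun x => fderiv ℝ u x e) y with hDudef
    have hW2 : HasFDerivAt (fun x => (fderiv ℝ u x - WvKO x₀ r Λ α x) e) (Du - Dv) y := by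
      have heq : (fun x => (fderiv ℝ u x - WvKO x₀ r Λ α x) e)
          = fun x => fderiv ℝ u x e - WvKO x₀ r Λ α x e := by
        funext x; simp
      rw [heq]
      exact (hucd e).sub (vKO_apply_hasFDerivAt x₀ r Λ α hy2 e)
    have := directional_second_nonpos' hlocmax hW1 hW2
    rw [ContinuousLinearMap.sub_apply] at this
    linarith
  -- laplacian comparison
  have hlapu : laplacian u y ≤ laplacian (vKO x₀ r Λ α) y := by
    have hw1v : ∀ᶠ x in nhds y, HasFDerivAt (vKO x₀ r Λ α) (WvKO x₀ r Λ α x) x := by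
      filter_upwards [isOpen_ball.mem_nhds hyball] with x hx
      exact vKO_hasFDerivAt x₀ r Λ α (norm_sq_lt_of_mem_ball hx)
    rw [laplacian_eq_of_hasFDerivAt hw1v
      (fun i => vKO_apply_hasFDerivAt x₀ r Λ α hy2 (EuclideanSpace.single i 1))]
    exact Finset.sum_le_sum fun i _ => hdir i
  have hT : 0 < r^2 - ‖y - x₀‖^2 := by linarith
  have hvy : 0 ≤ vKO x₀ r Λ α y :=
    mul_nonneg hΛ.le (Real.rpow_nonneg hT.le _)
  have hle : u y ^ q ≤ (vKO x₀ r Λ α y) ^ q := by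
    calc u y ^ q = laplacian u y := (hpde y (hball hyball)).symm
      _ ≤ laplacian (vKO x₀ r Λ α) y := hlapu
      _ ≤ (vKO x₀ r Λ α y) ^ q := vKO_superineq hn hq hα hK hr hΛ hΛq x₀ hyball
  have huy : u y ≤ vKO x₀ r Λ α y :=
    (Real.rpow_le_rpow_iff (hun y (hball hyball)) hvy (by linarith)).mp hle
  have : w y ≤ 0 := by simp only [hwdef]; linarith
  linarith

/-- Keller–Osserman estimate. For `n ≥ 1`, `q > 1` there is `C = C(n,q) > 0`
such that every nonnegative `C²` solution of `Δu = u^q` on a ball `B_R(x₀)` satisfies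
`u(x₀) ≤ C R^{−2/(q−1)}`. -/
theorem stmt10 (n : ℕ) (hn : 1 ≤ n) (q : ℝ) (hq : 1 < q) :
    ∃ C : ℝ, 0 < C ∧
      ∀ (x₀ : EuclideanSpace ℝ (Fin n)) (R : ℝ), 0 < R →
        ∀ u : EuclideanSpace ℝ (Fin n) → ℝ,
          ContDiffOn ℝ 2 u (ball x₀ R) →
          (∀ x ∈ ball x₀ R, 0 ≤ u x) →
          (∀ x ∈ ball x₀ R, laplacian u x = u x ^ q) →
          u x₀ ≤ C * R ^ (-(2 / (q - 1))) := by
  have hq1 : (0:ℝ) < q - 1 := by linarith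
  set α : ℝ := 2/(q-1) with hαdef
  have hαpos : 0 < α := by positivity
  set K : ℝ := α*(4*(α+1)+2*n) with hKdef
  have hKpos : 0 < K := by positivity
  refine ⟨K ^ (1/(q-1)), Real.rpow_pos_of_pos hKpos _, ?_⟩
  intro x₀ R hR u hu hun hpde
  have hstep : ∀ r : ℝ, 0 < r → r < R → u x₀ ≤ K ^ (1/(q-1)) * r ^ (-(2/(q-1))) := by
    intro r hr hrR
    set Λ : ℝ := (K*r^2) ^ ((q-1)⁻¹) with hΛdef
    have hΛ : 0 < Λ := Real.rpow_pos_of_pos (by positivity) _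
    have hΛq : Λ ^ (q-1) = K*r^2 := by
      rw [hΛdef, ← Real.rpow_mul (by positivity : (0:ℝ) ≤ K*r^2),
        inv_mul_cancel₀ hq1.ne', Real.rpow_one]
    have hkey := keyKO hq x₀ R u hu hun hpde hn hr hrR hαdef hKdef hΛ hΛq
    have hvx₀ : vKO x₀ r Λ α x₀ = K ^ (1/(q-1)) * r ^ (-(2/(q-1))) := by
      show Λ * (r^2 - ‖x₀ - x₀‖^2) ^ (-α) = _
      rw [sub_self, norm_zero, zero_pow (two_ne_zero), sub_zero]
      rw [hΛdef, Real.mul_rpow hKpos.le (by positivity), one_div, mul_assoc]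
      congr 1
      rw [← Real.rpow_add (by positivity : (0:ℝ) < r^2),
        ← Real.rpow_natCast r 2, ← Real.rpow_mul hr.le]
      congr 1
      push_cast
      rw [hαdef]
      field_simp
      ring
    rwa [hvx₀] at hkey
  -- pass to the limit r → R⁻
  have hcontR : ContinuousAt (fun r : ℝ => K ^ (1/(q-1)) * r ^ (-(2/(q-1)))) R :=
    ContinuousAt.mul continuousAt_const
      (Real.continuousAt_rpow_const R _ (Or.inl hR.ne'))
  have htend : Filter.Tendsto (fun r : ℝ => K ^ (1/(q-1)) * r ^ (-(2/(q-1))))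
      (nhdsWithin R (Set.Iio R)) (nhds (K ^ (1/(q-1)) * R ^ (-(2/(q-1))))) :=
    hcontR.continuousWithinAt.tendsto
  refine ge_of_tendsto htend ?_
  filter_upwards [Ioo_mem_nhdsLT hR] with r hr
  exact hstep r hr.1 hr.2
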